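/- Let G be a closed connected Banach-Lie subgroup of GL₂(H) with G* = G, with Lie algebra g, equipped with the left-invariant metric I(g, v) = ‖g^{-1}v‖₂ on tangent spaces T_g G = g·g. Then for g₀ ∈ G and v₀ ∈ g, the curve α(t) = g₀ e^{t v₀*} e^{t(v₀ - v₀*)} lies in G and is a geodesic of the Levi-Civita connection of the left-invariant metric (i.e., D_t α' = 0). -/

import Mathlib

set_option synthInstance.maxHeartbeats 1000000
set_option maxHeartbeats 1000000

open scoped ENNReal
open NormedSpace

noncomputable section

variable {H : Type*} [NormedAddCommGroup H] [InnerProductSpace ℂ H] [CompleteSpace H]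

/-- The index set of a chosen Hilbert basis of `H`. -/
def hsIndex (H : Type*) [NormedAddCommGroup H] [InnerProductSpace ℂ H] [CompleteSpace H] :
    Set H := (exists_hilbertBasis ℂ H).choose

/-- The (possibly infinite) sum `∑ ‖x eᵢ‖²` over a Hilbert basis. -/
def hsSq (x : H →L[ℂ] H) : ℝ≥0∞ := ∑' i : hsIndex H, (‖x i‖₊ : ℝ≥0∞) ^ 2

/-- `x` is a Hilbert-Schmidt operator. -/
def IsHS (x : H →L[ℂ] H) : Prop := hsSq x ≠ ⊤

/-- The Hilbert-Schmidt norm `‖x‖₂`. -/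
def hsNorm (x : H →L[ℂ] H) : ℝ := ((hsSq x) ^ (1/2 : ℝ)).toReal

/-- The modulus `|g| = (g* g)^{1/2}`. -/
def absOp (g : H →L[ℂ] H) : H →L[ℂ] H := CFC.sqrt (star g * g)

/-- The unitary part `u_g = g |g|⁻¹` in the polar decomposition. -/
def umod (g : H →L[ℂ] H) : H →L[ℂ] H := g * Ring.inverse (absOp g)

/-- `GL₂(H) = {g invertible : g - 1 Hilbert-Schmidt}`. -/
def GL2 (H : Type*) [NormedAddCommGroup H] [InnerProductSpace ℂ H] [CompleteSpace H] :
    Set (H →L[ℂ] H) := {g | IsUnit g ∧ IsHS (g - 1)}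

/-- The unitary group `U₂(H)`. -/
def U2 (H : Type*) [NormedAddCommGroup H] [InnerProductSpace ℂ H] [CompleteSpace H] :
    Set (H →L[ℂ] H) := {g | g ∈ unitary (H →L[ℂ] H) ∧ IsHS (g - 1)}

/-- The positive invertible part `GL₂⁺(H)`. -/
def GL2pos (H : Type*) [NormedAddCommGroup H] [InnerProductSpace ℂ H] [CompleteSpace H] :
    Set (H →L[ℂ] H) := {g | IsUnit g ∧ IsHS (g - 1) ∧ 0 ≤ g}

/-- Smooth curves inside `S` joining `p` to `q` (parametrized on `[0,1]`). -/
def curves (S : Set (H →L[ℂ] H)) (p q : H →L[ℂ] H) : Set (ℝ → H →L[ℂ] H) :=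
  {γ | ContDiff ℝ 1 γ ∧ (∀ t ∈ Set.Icc (0:ℝ) 1, γ t ∈ S) ∧ γ 0 = p ∧ γ 1 = q}

/-- Length of a curve with respect to a metric `F` on tangent vectors. -/
def clen (F : (H →L[ℂ] H) → (H →L[ℂ] H) → ℝ) (γ : ℝ → H →L[ℂ] H) : ℝ :=
  ∫ t in (0:ℝ)..1, F (γ t) (deriv γ t)

/-- The geodesic distance inside `S` with respect to the metric `F`. -/
def gdist (S : Set (H →L[ℂ] H)) (F : (H →L[ℂ] H) → (H →L[ℂ] H) → ℝ)
    (p q : H →L[ℂ] H) : ℝ := sInf (clen F '' curves S p q)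

/-- Left invariant metric `I(g, v) = ‖g⁻¹ v‖₂`. -/
def leftMetric (g v : H →L[ℂ] H) : ℝ := hsNorm (Ring.inverse g * v)

/-- Positive metric `𝔭(p, y) = ‖p^{-1/2} y p^{-1/2}‖₂`. -/
def posMetric (p y : H →L[ℂ] H) : ℝ :=
  hsNorm (Ring.inverse (CFC.sqrt p) * y * Ring.inverse (CFC.sqrt p))

/-- Polar (product) length of a pair of curves (unitary part, positive part). -/
def pairLen (γ₁ γ₂ : ℝ → H →L[ℂ] H) : ℝ :=
  ∫ t in (0:ℝ)..1,
    Real.sqrt (leftMetric (γ₁ t) (deriv γ₁ t) ^ 2 + posMetric (γ₂ t) (deriv γ₂ t) ^ 2)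

/-- Geodesic distance of the polar metric: infimum of polar lengths over pairs of
curves, in the unitary set `SU` and the positive set `SP`, joining the polar
decompositions of `p` and `q`. -/
def polarDist (SU SP : Set (H →L[ℂ] H)) (p q : H →L[ℂ] H) : ℝ :=
  sInf {L | ∃ γ₁ ∈ curves SU (umod p) (umod q), ∃ γ₂ ∈ curves SP (absOp p) (absOp q),
    L = pairLen γ₁ γ₂}

/-- `x` is a Cauchy sequence for the distance function `d`. -/
def IsCauchyWith {A : Type*} (d : A → A → ℝ) (x : ℕ → A) : Prop :=
  ∀ ε > 0, ∃ N, ∀ m ≥ N, ∀ n ≥ N, d (x m) (x n) < ε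

/-- `x` converges to `l` for the distance function `d`. -/
def TendsToWith {A : Type*} (d : A → A → ℝ) (x : ℕ → A) (l : A) : Prop :=
  ∀ ε > 0, ∃ N, ∀ n ≥ N, d (x n) l < ε

/-- The curve `α(t) = g₀ e^{t v₀*} e^{t (v₀ - v₀*)}`. -/
def geo (g₀ v₀ : H →L[ℂ] H) : ℝ → H →L[ℂ] H := fun t =>
  g₀ * NormedSpace.exp (t • star v₀) * NormedSpace.exp (t • (v₀ - star v₀))

/-- The left logarithmic velocity `β = α⁻¹ α'` of a curve `α`. -/
def lvel (α : ℝ → H →L[ℂ] H) : ℝ → H →L[ℂ] H := fun t => Ring.inverse (α t) * deriv α t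

private lemma hasDerivAt_expC (x : H →L[ℂ] H) (t : ℝ) :
    HasDerivAt (fun s : ℝ => NormedSpace.exp (s • x)) (NormedSpace.exp (t • x) * x) t := by
  have h := hasDerivAt_exp_smul_const (𝕂 := ℝ) x t
  simpa using h

private lemma hasDerivAt_expC' (x : H →L[ℂ] H) (t : ℝ) :
    HasDerivAt (fun s : ℝ => NormedSpace.exp (s • x)) (x * NormedSpace.exp (t • x)) t := by
  have h := hasDerivAt_exp_smul_const' (𝕂 := ℝ) x t
  simpa using h

private lemma expC_mul_expC_neg (x : H →L[ℂ] H) : NormedSpace.exp x * NormedSpace.exp (-x) = 1 := by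
  rw [← exp_add_of_commute_of_mem_ball (𝕂 := ℂ) ((Commute.refl x).neg_right) (by simp [expSeries_radius_eq_top]) (by simp [expSeries_radius_eq_top]), add_neg_cancel, exp_zero]

private lemma expC_neg_mul_expC (x : H →L[ℂ] H) : NormedSpace.exp (-x) * NormedSpace.exp x = 1 := by
  rw [← exp_add_of_commute_of_mem_ball (𝕂 := ℂ) ((Commute.refl x).neg_left) (by simp [expSeries_radius_eq_top]) (by simp [expSeries_radius_eq_top]), neg_add_cancel, exp_zero]

private lemma mul_cancel_left {R : Type*} [Ring R] {u v x : R} (h : u * v = 1) :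
    u * (v * x) = x := by rw [← mul_assoc, h, one_mul]

/-- For a closed connected self-adjoint Banach-Lie subgroup `G ⊆ GL₂(H)` with Lie algebra
`𝔤`, the curve `α(t) = g₀ e^{t v₀*} e^{t(v₀ - v₀*)}` lies in `G` and is a geodesic of the
left invariant metric: with `β = μ = α⁻¹ α'`, it satisfies
`μ' + (1/2)([β,μ] + [β,μ*] + [μ,β*]) = 0`. -/
theorem left_invariant_geodesic (G : Set (H →L[ℂ] H)) (𝔤 : Submodule ℝ (H →L[ℂ] H))
    (hG : G ⊆ GL2 H) (h1 : 1 ∈ G) (hmul : ∀ a ∈ G, ∀ b ∈ G, a * b ∈ G)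
    (hinv : ∀ a ∈ G, Ring.inverse a ∈ G) (hstarG : ∀ a ∈ G, star a ∈ G)
    (hGclosed : IsClosed G) (hGconn : IsPreconnected G)
    (h𝔤closed : IsClosed (𝔤 : Set (H →L[ℂ] H)))
    (h𝔤HS : ∀ v ∈ 𝔤, IsHS v)
    (h𝔤br : ∀ v ∈ 𝔤, ∀ w ∈ 𝔤, v * w - w * v ∈ 𝔤)
    (h𝔤star : ∀ v ∈ 𝔤, star v ∈ 𝔤)
    (hExp : ∀ v ∈ 𝔤, ∀ t : ℝ, NormedSpace.exp (t • v) ∈ G)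
    (g₀ v₀ : H →L[ℂ] H) (hg₀ : g₀ ∈ G) (hv₀ : v₀ ∈ 𝔤) :
    (∀ t : ℝ, geo g₀ v₀ t ∈ G) ∧
    ∀ t : ℝ,
      deriv (lvel (geo g₀ v₀)) t +
        (2⁻¹ : ℝ) •
          ((lvel (geo g₀ v₀) t * lvel (geo g₀ v₀) t -
              lvel (geo g₀ v₀) t * lvel (geo g₀ v₀) t) +
            (lvel (geo g₀ v₀) t * star (lvel (geo g₀ v₀) t) -
              star (lvel (geo g₀ v₀) t) * lvel (geo g₀ v₀) t) +
            (lvel (geo g₀ v₀) t * star (lvel (geo g₀ v₀) t) -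
              star (lvel (geo g₀ v₀) t) * lvel (geo g₀ v₀) t)) = 0 := by
  classical
  set A : H →L[ℂ] H := star v₀ with hA_def
  set B : H →L[ℂ] H := v₀ - star v₀ with hB_def
  have hA𝔤 : A ∈ 𝔤 := h𝔤star v₀ hv₀
  have hB𝔤 : B ∈ 𝔤 := Submodule.sub_mem _ hv₀ hA𝔤
  have hmem : ∀ t : ℝ, geo g₀ v₀ t ∈ G := fun t =>
    hmul _ (hmul _ hg₀ _ (hExp A hA𝔤 t)) _ (hExp B hB𝔤 t)
  refine ⟨hmem, fun t => ?_⟩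
  have hUnit : ∀ s : ℝ, IsUnit (geo g₀ v₀ s) := fun s => (hG (hmem s)).1
  -- cancellation facts
  have hBB : ∀ s : ℝ, NormedSpace.exp (s • B) * NormedSpace.exp (s • (-B)) = 1 := fun s => by
    rw [smul_neg]; exact expC_mul_expC_neg _
  -- the left logarithmic velocity
  have hμ : ∀ s : ℝ, lvel (geo g₀ v₀) s
      = NormedSpace.exp (s • (-B)) * A * NormedSpace.exp (s • B) + B := by
    intro s
    have hder : HasDerivAt (geo g₀ v₀)
        (geo g₀ v₀ s * (NormedSpace.exp (s • (-B)) * A * NormedSpace.exp (s • B) + B)) s := by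
      have h3 : HasDerivAt (fun u : ℝ => g₀ * NormedSpace.exp (u • A) * NormedSpace.exp (u • B))
          (g₀ * (NormedSpace.exp (s • A) * A) * NormedSpace.exp (s • B)
            + g₀ * NormedSpace.exp (s • A) * (NormedSpace.exp (s • B) * B)) s :=
        HasDerivAt.mul ((hasDerivAt_expC A s).const_mul g₀) (hasDerivAt_expC B s)
      have : geo g₀ v₀ = fun u : ℝ => g₀ * NormedSpace.exp (u • A) * NormedSpace.exp (u • B) := rfl
      rw [this]
      convert h3 using 1
      show g₀ * NormedSpace.exp (s • A) * NormedSpace.exp (s • B) * (NormedSpace.exp (s • (-B)) * A * NormedSpace.exp (s • B) + B) = _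
      simp only [mul_add, mul_assoc]
      rw [mul_cancel_left (hBB s)]
    show Ring.inverse (geo g₀ v₀ s) * deriv (geo g₀ v₀) s = _
    rw [hder.deriv, ← mul_assoc, Ring.inverse_mul_cancel _ (hUnit s), one_mul]
  -- star of the velocity
  have hstarB : star B = -B := by simp [hB_def]
  have hstarExp : ∀ s : ℝ, star (NormedSpace.exp (s • B)) = NormedSpace.exp (s • (-B)) := fun s => by
    rw [star_exp]; congr 1; simp [hstarB]
  have hstarExp' : ∀ s : ℝ, star (NormedSpace.exp (s • (-B))) = NormedSpace.exp (s • B) := fun s => by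
    rw [star_exp]; congr 1; simp [hstarB]
  have hcomm : ∀ s : ℝ, NormedSpace.exp (s • (-B)) * B = B * NormedSpace.exp (s • (-B)) := fun s =>
    (((Commute.refl B).neg_right.smul_right s).exp_right).symm
  have hstarμ : ∀ s : ℝ, star (lvel (geo g₀ v₀) s)
      = NormedSpace.exp (s • (-B)) * A * NormedSpace.exp (s • B) := by
    intro s
    rw [hμ s, star_add, star_mul, star_mul, hstarExp, hstarExp', hstarB]
    have hAv : star A = v₀ := by simp [hA_def]
    rw [hAv]
    have hv : v₀ = A + B := by simp [hA_def, hB_def]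
    calc NormedSpace.exp (s • (-B)) * (v₀ * NormedSpace.exp (s • B)) + -B
        = NormedSpace.exp (s • (-B)) * A * NormedSpace.exp (s • B)
          + (NormedSpace.exp (s • (-B)) * B * NormedSpace.exp (s • B) + -B) := by
          rw [hv]; noncomm_ring
      _ = NormedSpace.exp (s • (-B)) * A * NormedSpace.exp (s • B) := by
          rw [hcomm s, mul_assoc, mul_assoc, smul_neg, expC_neg_mul_expC]
          simp
  -- derivative of the velocity
  have hfun : lvel (geo g₀ v₀) = fun s : ℝ => NormedSpace.exp (s • (-B)) * A * NormedSpace.exp (s • B) + B :=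
    funext hμ
  have hCder : HasDerivAt (fun s : ℝ => NormedSpace.exp (s • (-B)) * A * NormedSpace.exp (s • B) + B)
      ((-B) * NormedSpace.exp (t • (-B)) * A * NormedSpace.exp (t • B)
        + NormedSpace.exp (t • (-B)) * A * (NormedSpace.exp (t • B) * B)) t := by
    have := HasDerivAt.mul ((hasDerivAt_expC' (-B) t).mul_const A) (hasDerivAt_expC B t)
    simpa [mul_assoc] using this.add_const B
  have hd : deriv (lvel (geo g₀ v₀)) t
      = (-B) * NormedSpace.exp (t • (-B)) * A * NormedSpace.exp (t • B)
        + NormedSpace.exp (t • (-B)) * A * (NormedSpace.exp (t • B) * B) := by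
    rw [hfun]; exact hCder.deriv
  rw [hd, hstarμ t, hμ t]
  set C : H →L[ℂ] H := NormedSpace.exp (t • (-B)) * A * NormedSpace.exp (t • B) with hC_def
  have e1 : (-B) * NormedSpace.exp (t • (-B)) * A * NormedSpace.exp (t • B)
      + NormedSpace.exp (t • (-B)) * A * (NormedSpace.exp (t • B) * B) = C * B - B * C := by
    rw [hC_def]; noncomm_ring
  have e2 : (C + B) * C - C * (C + B) = B * C - C * B := by noncomm_ring
  have e3 : (C + B) * (C + B) - (C + B) * (C + B) = 0 := sub_self _
  rw [e1, e2, e3]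
  have : (2⁻¹ : ℝ) • ((0 : H →L[ℂ] H) + (B * C - C * B) + (B * C - C * B))
      = B * C - C * B := by
    rw [zero_add, ← two_smul ℝ, smul_smul]
    norm_num
  rw [this]
  abel
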